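/- arXiv:2507.21801 — 6 statements merged into one kernel-verified Lean document; each statement's English description precedes it below -/
import Mathlib

section
/- Let (A_i)_{i∈ℕ} be a sequence of topological abelian groups together with group homomorphisms f_i : A_{i+1} → A_i for each i ∈ ℕ. Endow the product ∏_{i∈ℕ} A_i with the product topology. Then the group homomorphism d : ∏_{i∈ℕ} A_i → ∏_{i∈ℕ} A_i defined by d((a_i)_i) = (a_i − f_i(a_{i+1}))_i has dense range. Consequently, the quotient topology on the cokernel of d (which is the group lim¹ A_i of the projective system) is the indiscrete (trivial) topology. -/
/-- Approximate solution: `approx f b N i = 0` for `i ≥ N`, and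
`approx f b N i = b i + f i (approx f b N (i+1))` for `i < N`. -/
def approx {A : ℕ → Type*} [∀ i, AddCommGroup (A i)]
    (f : ∀ i, A (i + 1) →+ A i) (b : ∀ i, A i) (N : ℕ) : ∀ i, A i :=
  fun i =>
    if h : N ≤ i then 0 else b i + f i (approx f b N (i + 1))
termination_by i => N - i
decreasing_by omega

lemma approx_spec {A : ℕ → Type*} [∀ i, AddCommGroup (A i)]
    (f : ∀ i, A (i + 1) →+ A i) (b : ∀ i, A i) (N : ℕ) {i : ℕ} (h : i < N) :
    approx f b N i = b i + f i (approx f b N (i + 1)) := by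
  rw [approx]
  simp [Nat.not_le.mpr h]

/-- For a projective system `(A i, f i : A (i+1) →+ A i)` of topological abelian groups,
the map `d : ∏ A i →+ ∏ A i`, `d a i = a i - f i (a (i+1))`, has dense range for the
product topology; consequently the quotient topology on `lim¹ A = coker d` is the
indiscrete topology (its only open sets are `∅` and `univ`). -/
theorem stmt_1 (A : ℕ → Type*) [∀ i, AddCommGroup (A i)] [∀ i, TopologicalSpace (A i)]
    [∀ i, IsTopologicalAddGroup (A i)]
    (f : ∀ i, A (i + 1) →+ A i)
    (d : (∀ i, A i) →+ (∀ i, A i))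
    (hd : ∀ (a : ∀ i, A i) (i : ℕ), d a i = a i - f i (a (i + 1))) :
    DenseRange d ∧
      ∀ s : Set ((∀ i, A i) ⧸ d.range), IsOpen s → s = ∅ ∨ s = Set.univ := by
  have hdense : DenseRange d := by
    intro b
    have key : ∀ N i, i < N → d (approx f b N) i = b i := by
      intro N i h
      rw [hd, approx_spec f b N h]
      abel
    have h1 : Filter.Tendsto (fun N : ℕ => d (approx f b N)) Filter.atTop (nhds b) := by
      rw [tendsto_pi_nhds]
      intro i
      refine Filter.Tendsto.congr' ?_ tendsto_const_nhds
      filter_upwards [Filter.eventually_ge_atTop (i + 1)] with N hN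
      exact (key N i (by omega)).symm
    exact mem_closure_of_tendsto h1 (by filter_upwards with N using Set.mem_range_self _)
  refine ⟨hdense, ?_⟩
  intro s hs
  rcases s.eq_empty_or_nonempty with h | ⟨q, hq⟩
  · exact Or.inl h
  right
  set V : Set (∀ i, A i) := QuotientAddGroup.mk ⁻¹' s with hV
  have hVopen : IsOpen V := hs.preimage continuous_quot_mk
  obtain ⟨x, hx⟩ : V.Nonempty := by
    obtain ⟨x, rfl⟩ := QuotientAddGroup.mk_surjective q
    exact ⟨x, hq⟩
  have hVuniv : V = Set.univ := by
    ext z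
    simp only [Set.mem_univ, iff_true]
    -- the open set `(z + ·) ⁻¹' V` is nonempty, so it meets `range d`
    have hopen : IsOpen ((fun r => z + r) ⁻¹' V) :=
      hVopen.preimage (continuous_const.add continuous_id)
    have hne : ((fun r => z + r) ⁻¹' V).Nonempty := by
      refine ⟨x - z, ?_⟩
      simpa [add_sub_cancel] using hx
    obtain ⟨a, hr⟩ := hdense.exists_mem_open hopen hne
    set r := d a with hrdef
    have hrange : r ∈ d.range := ⟨a, rfl⟩
    have : QuotientAddGroup.mk (s := d.range) (z + r) = QuotientAddGroup.mk z := by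
      rw [QuotientAddGroup.eq_iff_sub_mem]
      simpa [add_sub_cancel_left] using hrange
    have hz : QuotientAddGroup.mk (s := d.range) z ∈ s := by
      rw [← this]; exact hr
    exact hz
  apply Set.eq_univ_of_forall
  intro q'
  obtain ⟨z, rfl⟩ := QuotientAddGroup.mk_surjective q'
  have : z ∈ V := hVuniv ▸ Set.mem_univ z
  exact this
end

section
/- Let p be a prime number and let M be a module over the ring ℤ_p of p-adic integers. If M is p-adically separated and p-adically complete, then M is weakly p-complete. -/
/-- A `ℤ_p`-module which is `p`-adically separated and `p`-adically complete is
weakly `p`-complete (derived `p`-complete). -/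
theorem stmt_2 (p : ℕ) [Fact p.Prime] (M : Type*) [AddCommGroup M] [Module ℤ_[p] M]
    (hsep : ∀ x : M, (∀ n : ℕ, ∃ y : M, x = ((p : ℤ_[p]) ^ n) • y) → x = 0)
    (hcomp : ∀ x : ℕ → M,
      (∀ n : ℕ, ∃ y : M, x (n + 1) - x n = ((p : ℤ_[p]) ^ n) • y) →
      ∃ z : M, ∀ n : ℕ, ∃ y : M, z - x n = ((p : ℤ_[p]) ^ n) • y) :
    (∀ m : ℕ → M, (∀ i, m i = (p : ℤ_[p]) • m (i + 1)) → ∀ i, m i = 0) ∧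
    Function.Surjective (fun m : ℕ → M => fun i => m i - (p : ℤ_[p]) • m (i + 1)) := by
  constructor
  · intro m h i
    apply hsep
    intro n
    refine ⟨m (i + n), ?_⟩
    induction n with
    | zero => simp
    | succ n ih =>
      show m i = ((p : ℤ_[p]) ^ (n + 1)) • m ((i + n) + 1)
      rw [pow_succ, mul_smul, ← h (i + n)]
      exact ih
  · intro f
    set x : ℕ → ℕ → M := fun i n => ∑ j ∈ Finset.range n, ((p : ℤ_[p]) ^ j) • f (i + j)
      with hxdef
    have H : ∀ i, ∃ z, ∀ n, ∃ y, z - x i n = ((p : ℤ_[p]) ^ n) • y := by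
      intro i
      refine hcomp (x i) (fun n => ⟨f (i + n), ?_⟩)
      simp [hxdef, Finset.sum_range_succ]
    choose z hz using H
    refine ⟨z, ?_⟩
    funext i
    show z i - (p : ℤ_[p]) • z (i + 1) = f i
    have key : z i - (p : ℤ_[p]) • z (i + 1) - f i = 0 := by
      apply hsep
      intro n
      obtain ⟨a, ha⟩ := hz i (n + 1)
      obtain ⟨b, hb⟩ := hz (i + 1) n
      have hshift : x i (n + 1) = f i + (p : ℤ_[p]) • x (i + 1) n := by
        rw [hxdef]
        simp only [Finset.sum_range_succ', pow_zero, one_smul, Nat.add_zero, Finset.smul_sum]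
        rw [add_comm]
        congr 1
        refine Finset.sum_congr rfl (fun j _ => ?_)
        rw [smul_smul, ← pow_succ']
        congr 2
        omega
      refine ⟨(p : ℤ_[p]) • a - (p : ℤ_[p]) • b, ?_⟩
      have e : z i - (p : ℤ_[p]) • z (i + 1) - f i
          = ((p : ℤ_[p]) ^ (n + 1)) • a - (p : ℤ_[p]) • (((p : ℤ_[p]) ^ n) • b) := by
        rw [← ha, ← hb, hshift, smul_sub]
        abel
      rw [e, smul_sub, smul_smul, smul_smul, smul_smul, ← pow_succ', ← pow_succ]
    linear_combination (norm := abel) key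
end

section
/- Let p be a prime number and let (M_i, f_i : M_{i+1} → M_i)_{i∈ℕ} be a projective system of ℤ_p-modules such that every M_i is torsion with finite exponent, i.e., for each i there exists e_i ∈ ℕ with p^{e_i}·M_i = 0. Then the inverse limit L = { m ∈ ∏_{i∈ℕ} M_i : f_i(m_{i+1}) = m_i for all i } is p-adically separated and p-adically complete. -/
/-- The inverse limit of a projective system of `ℤ_p`-modules which are all torsion with
finite exponent is `p`-adically separated and `p`-adically complete. -/
theorem stmt_3 (p : ℕ) [Fact p.Prime] (M : ℕ → Type*)
    [∀ i, AddCommGroup (M i)] [∀ i, Module ℤ_[p] (M i)]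
    (f : ∀ i, M (i + 1) →ₗ[ℤ_[p]] M i)
    (hexp : ∀ i, ∃ e : ℕ, ∀ x : M i, ((p : ℤ_[p]) ^ e) • x = 0)
    (L : Submodule ℤ_[p] (∀ i, M i))
    (hL : ∀ m : ∀ i, M i, m ∈ L ↔ ∀ i, f i (m (i + 1)) = m i) :
    (∀ x : L, (∀ n : ℕ, ∃ y : L, x = ((p : ℤ_[p]) ^ n) • y) → x = 0) ∧
    (∀ x : ℕ → L,
      (∀ n : ℕ, ∃ y : L, x (n + 1) - x n = ((p : ℤ_[p]) ^ n) • y) →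
      ∃ z : L, ∀ n : ℕ, ∃ y : L, z - x n = ((p : ℤ_[p]) ^ n) • y) := by
  classical
  choose e he using hexp
  have kill : ∀ (i k : ℕ) (v : M i), e i ≤ k → ((p : ℤ_[p]) ^ k) • v = 0 := by
    intro i k v hk
    rw [show k = e i + (k - e i) from (Nat.add_sub_cancel' hk).symm, pow_add, mul_smul, he]
  constructor
  · intro x hx
    apply Subtype.ext
    funext i
    obtain ⟨y, hy⟩ := hx (e i)
    have := congrFun (congrArg Subtype.val hy) i
    simp only [Submodule.coe_smul, Pi.smul_apply] at this
    rw [this, he]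
    rfl
  · intro x hx
    choose c hc using hx
    have hcomp : ∀ n i, (x (n+1)).1 i - (x n).1 i = ((p : ℤ_[p]) ^ n) • (c n).1 i := by
      intro n i
      have := congrFun (congrArg Subtype.val (hc n)) i
      simpa using this
    have tel : ∀ n t i, (x (n+t)).1 i - (x n).1 i
        = ∑ k ∈ Finset.range t, ((p : ℤ_[p]) ^ (n+k)) • (c (n+k)).1 i := by
      intro n t i
      induction t with
      | zero => simp
      | succ t ih =>
        rw [Finset.sum_range_succ, ← ih, ← hcomp (n+t) i, ← Nat.add_assoc]
        abel
    have stab : ∀ i n, e i ≤ n → (x n).1 i = (x (e i)).1 i := by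
      intro i n hn
      have h1 := tel (e i) (n - e i) i
      rw [Nat.add_sub_cancel' hn] at h1
      have h2 : ∑ k ∈ Finset.range (n - e i),
          ((p : ℤ_[p]) ^ (e i + k)) • (c (e i + k)).1 i = 0 :=
        Finset.sum_eq_zero fun k _ => kill i (e i + k) _ (Nat.le_add_right _ _)
      rw [h2] at h1
      exact sub_eq_zero.mp h1
    set z : ∀ i, M i := fun i => (x (e i)).1 i with hzdef
    have hzmem : z ∈ L := by
      rw [hL]
      intro i
      set N := max (e i) (e (i+1)) with hN
      have h1 : z (i+1) = (x N).1 (i+1) := (stab (i+1) N (le_max_right _ _)).symm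
      have h2 : z i = (x N).1 i := (stab i N (le_max_left _ _)).symm
      rw [h1, h2]
      exact (hL _).1 (x N).2 i
    refine ⟨⟨z, hzmem⟩, fun n => ?_⟩
    set y : ∀ i, M i := fun i =>
      ∑ k ∈ Finset.range (e i), ((p : ℤ_[p]) ^ k) • (c (n+k)).1 i with hydef
    have hext : ∀ (i N : ℕ), e i ≤ N →
        y i = ∑ k ∈ Finset.range N, ((p : ℤ_[p]) ^ k) • (c (n+k)).1 i := by
      intro i N hN
      exact Finset.sum_subset (Finset.range_subset_range.2 hN)
        (fun k _ hk => kill i k _ (Nat.le_of_not_lt (fun h => hk (Finset.mem_range.2 h))))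
    have hymem : y ∈ L := by
      rw [hL]
      intro i
      set N := max (e i) (e (i+1)) with hN
      rw [hext (i+1) N (le_max_right _ _), hext i N (le_max_left _ _), map_sum]
      refine Finset.sum_congr rfl fun k _ => ?_
      rw [map_smul, (hL _).1 (c (n+k)).2 i]
    refine ⟨⟨y, hymem⟩, ?_⟩
    apply Subtype.ext
    funext i
    have lhs : ((⟨z, hzmem⟩ : L) - x n).1 i = z i - (x n).1 i := rfl
    have rhs : ((((p : ℤ_[p]) ^ n) • (⟨y, hymem⟩ : L)) : L).1 i = ((p : ℤ_[p]) ^ n) • y i := rfl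
    rw [lhs, rhs]
    have hz : z i = (x (n + e i)).1 i := (stab i (n + e i) (Nat.le_add_left _ _)).symm
    rw [hz, tel n (e i) i, hydef, Finset.smul_sum]
    refine Finset.sum_congr rfl fun k _ => ?_
    rw [smul_smul, ← pow_add]
end

section
/- Let p be a prime number and let M be a weakly p-complete ℤ_p-module. Then: (1) M is p-adically complete; (2) if the torsion submodule of M has finite exponent, i.e., there exists s ∈ ℕ such that p^s·x = 0 for every x ∈ M killed by some power of p, then M is p-adically separated; (3) every ℤ_p-submodule D of M satisfying p·D = D is trivial. -/
/-- A weakly `p`-complete `ℤ_p`-module `M` is (1) `p`-adically complete; (2) `p`-adically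
separated provided its torsion submodule has finite exponent; and (3) has trivial maximal
divisible submodule: any submodule `D` with `p • D = D` is trivial. -/
theorem stmt_4 (p : ℕ) [Fact p.Prime] (M : Type*) [AddCommGroup M] [Module ℤ_[p] M]
    (hw1 : ∀ m : ℕ → M, (∀ i, m i = (p : ℤ_[p]) • m (i + 1)) → ∀ i, m i = 0)
    (hw2 : Function.Surjective (fun m : ℕ → M => fun i => m i - (p : ℤ_[p]) • m (i + 1))) :
    (∀ x : ℕ → M,
      (∀ n : ℕ, ∃ y : M, x (n + 1) - x n = ((p : ℤ_[p]) ^ n) • y) →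
      ∃ z : M, ∀ n : ℕ, ∃ y : M, z - x n = ((p : ℤ_[p]) ^ n) • y) ∧
    ((∃ s : ℕ, ∀ x : M, (∃ n : ℕ, ((p : ℤ_[p]) ^ n) • x = 0) → ((p : ℤ_[p]) ^ s) • x = 0) →
      ∀ x : M, (∀ n : ℕ, ∃ y : M, x = ((p : ℤ_[p]) ^ n) • y) → x = 0) ∧
    (∀ D : Submodule ℤ_[p] M, (∀ x ∈ D, ∃ y ∈ D, x = (p : ℤ_[p]) • y) → D = ⊥) := by
  refine ⟨?_, ?_, ?_⟩
  · -- (1) completeness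
    intro x h
    choose y hy using h
    obtain ⟨t, ht⟩ := hw2 y
    have ht' : ∀ n, t n - (p : ℤ_[p]) • t (n + 1) = y n := fun n => congrFun ht n
    refine ⟨x 0 + t 0, fun n => ⟨t n, ?_⟩⟩
    induction n with
    | zero => simp
    | succ n ih =>
      have e1 : x 0 + t 0 - x (n + 1) = (x 0 + t 0 - x n) - (x (n + 1) - x n) := by abel
      have e2 : t n - y n = (p : ℤ_[p]) • t (n + 1) := by rw [← ht' n]; abel
      rw [e1, ih, hy n, ← smul_sub, e2, smul_smul, ← pow_succ]
  · -- (2) separatedness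
    rintro ⟨s, hs⟩ x hx
    choose y hy using hx
    have hx0 : x = y 0 := by simpa using hy 0
    have hd : ∀ n, ((p : ℤ_[p]) ^ s) • (y n - (p : ℤ_[p]) • y (n + 1)) = 0 := by
      intro n
      refine hs _ ⟨n, ?_⟩
      rw [smul_sub, smul_smul, ← pow_succ, ← hy n, ← hy (n + 1), sub_self]
    have hm : ∀ i, ((p : ℤ_[p]) ^ s) • y i = 0 := by
      refine hw1 (fun i => ((p : ℤ_[p]) ^ s) • y i) (fun i => ?_)
      have := hd i
      rw [smul_sub] at this
      have h3 := sub_eq_zero.mp this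
      show ((p : ℤ_[p]) ^ s) • y i = (p : ℤ_[p]) • ((p : ℤ_[p]) ^ s) • y (i + 1)
      rw [h3, smul_comm]
    have hxs : ((p : ℤ_[p]) ^ s) • x = 0 := by rw [hx0]; exact hm 0
    have h2s : ((p : ℤ_[p]) ^ (s + s)) • y s = 0 := by
      rw [pow_add, mul_smul, ← hy s, hxs]
    have : ((p : ℤ_[p]) ^ s) • y s = 0 := hs _ ⟨s + s, h2s⟩
    rw [hy s, this]
  · -- (3) divisible submodule is trivial
    intro D hD
    rw [eq_bot_iff]
    intro x hx
    rw [Submodule.mem_bot]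
    have next : ∀ z : {z : M // z ∈ D}, ∃ y : M, y ∈ D ∧ (z : M) = (p : ℤ_[p]) • y := by
      rintro ⟨z, hz⟩
      obtain ⟨y, hy1, hy2⟩ := hD z hz
      exact ⟨y, hy1, hy2⟩
    let f : ℕ → {z : M // z ∈ D} := fun n =>
      Nat.rec ⟨x, hx⟩ (fun _ z => ⟨(next z).choose, (next z).choose_spec.1⟩) n
    have hf : ∀ n, (f n).1 = (p : ℤ_[p]) • (f (n + 1)).1 := by
      intro n
      have h1 : (f (n + 1)).1 = (next (f n)).choose := rfl
      rw [h1]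
      exact (next (f n)).choose_spec.2
    have := hw1 (fun n => (f n).1) hf 0
    simpa [f] using this
end

section
/- Let p be a prime number and let 0 → M' → M → M'' → 0 be a short exact sequence of ℤ_p-modules. If two of the three modules M', M, M'' are weakly p-complete, then the third module is weakly p-complete. -/
/-- A `ℤ_p`-module `M` is weakly `p`-complete (derived `p`-complete) if the only
`p`-divisible sequence in `M` is zero and the map `(m_i)_i ↦ (m_i - p • m_{i+1})_i` on
`∏_{i ∈ ℕ} M` is surjective. -/
def IsWeaklyPComplete (p : ℕ) [Fact p.Prime] (M : Type*) [AddCommGroup M]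
    [Module ℤ_[p] M] : Prop :=
  (∀ m : ℕ → M, (∀ i, m i = (p : ℤ_[p]) • m (i + 1)) → ∀ i, m i = 0) ∧
  Function.Surjective (fun m : ℕ → M => fun i => m i - (p : ℤ_[p]) • m (i + 1))

/-- In a short exact sequence `0 → M' → M → M'' → 0` of `ℤ_p`-modules, if two of the three
modules are weakly `p`-complete, then so is the third. -/
theorem stmt_5 (p : ℕ) [Fact p.Prime]
    (M' M M'' : Type*) [AddCommGroup M'] [AddCommGroup M] [AddCommGroup M'']
    [Module ℤ_[p] M'] [Module ℤ_[p] M] [Module ℤ_[p] M'']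
    (f : M' →ₗ[ℤ_[p]] M) (g : M →ₗ[ℤ_[p]] M'')
    (hf : Function.Injective f) (hg : Function.Surjective g)
    (hfg : LinearMap.range f = LinearMap.ker g) :
    (IsWeaklyPComplete p M' ∧ IsWeaklyPComplete p M → IsWeaklyPComplete p M'') ∧
    (IsWeaklyPComplete p M' ∧ IsWeaklyPComplete p M'' → IsWeaklyPComplete p M) ∧
    (IsWeaklyPComplete p M ∧ IsWeaklyPComplete p M'' → IsWeaklyPComplete p M') := by
  classical
  have hgf : ∀ a : M', g (f a) = 0 := by
    intro a
    have : f a ∈ LinearMap.ker g := hfg ▸ LinearMap.mem_range_self f a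
    simpa using this
  have hker : ∀ x : M, g x = 0 → ∃ a, f a = x := by
    intro x hx
    have : x ∈ LinearMap.range f := hfg ▸ (LinearMap.mem_ker.mpr hx)
    exact this
  refine ⟨?_, ?_, ?_⟩
  · -- M', M complete ⇒ M'' complete
    rintro ⟨⟨h1inj, h1surj⟩, ⟨h2inj, h2surj⟩⟩
    constructor
    · intro m'' hm''
      choose x hx using fun j => hg (m'' j)
      choose a ha using fun j => hker (x j - (p : ℤ_[p]) • x (j + 1)) (by
        rw [map_sub, map_smul, hx, hx, ← hm'' j, sub_self])
      obtain ⟨b, hb⟩ := h1surj a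
      have hb' : ∀ j, b j - (p : ℤ_[p]) • b (j + 1) = a j := fun j => congrFun hb j
      have hx0 : ∀ j, x j - f (b j) = 0 := by
        apply h2inj
        intro j
        rw [← sub_eq_zero]
        have key : x j - f (b j) - (p : ℤ_[p]) • (x (j + 1) - f (b (j + 1)))
            = (x j - (p : ℤ_[p]) • x (j + 1)) - f (b j - (p : ℤ_[p]) • b (j + 1)) := by
          rw [map_sub, map_smul, smul_sub]; abel
        rw [key, hb', ha, sub_self]
      intro j
      rw [← hx j, sub_eq_zero.mp (hx0 j), hgf]
    · intro n''
      choose n hn using fun j => hg (n'' j)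
      obtain ⟨x, hx⟩ := h2surj n
      refine ⟨fun j => g (x j), funext fun i => ?_⟩
      have hx' : x i - (p : ℤ_[p]) • x (i + 1) = n i := congrFun hx i
      show g (x i) - (p : ℤ_[p]) • g (x (i + 1)) = n'' i
      rw [← map_smul, ← map_sub, hx', hn]
  · -- M', M'' complete ⇒ M complete
    rintro ⟨⟨h1inj, h1surj⟩, ⟨h3inj, h3surj⟩⟩
    constructor
    · intro x hx
      have hgx : ∀ j, g (x j) = 0 := by
        apply h3inj
        intro j
        rw [hx j, map_smul]
      choose a ha using fun j => hker (x j) (hgx j)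
      have ha0 : ∀ j, a j = 0 := by
        apply h1inj
        intro j
        apply hf
        rw [map_smul, ha, ha, hx]
      intro j
      rw [← ha j, ha0, map_zero]
    · intro y
      obtain ⟨z'', hz''⟩ := h3surj (fun j => g (y j))
      have hz''' : ∀ j, z'' j - (p : ℤ_[p]) • z'' (j + 1) = g (y j) := fun j => congrFun hz'' j
      choose z hz using fun j => hg (z'' j)
      choose b hb using fun j => hker (y j - (z j - (p : ℤ_[p]) • z (j + 1))) (by
        rw [map_sub, map_sub, map_smul, hz, hz, hz''', sub_self])
      obtain ⟨a, ha⟩ := h1surj b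
      have ha' : ∀ j, a j - (p : ℤ_[p]) • a (j + 1) = b j := fun j => congrFun ha j
      refine ⟨fun j => z j + f (a j), funext fun j => ?_⟩
      show z j + f (a j) - (p : ℤ_[p]) • (z (j + 1) + f (a (j + 1))) = y j
      have e1 : f (a j) - (p : ℤ_[p]) • f (a (j + 1)) = y j - (z j - (p : ℤ_[p]) • z (j + 1)) := by
        rw [← map_smul, ← map_sub, ha', hb]
      have key : z j + f (a j) - (p : ℤ_[p]) • (z (j + 1) + f (a (j + 1)))
          = (z j - (p : ℤ_[p]) • z (j + 1)) + (f (a j) - (p : ℤ_[p]) • f (a (j + 1))) := by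
        rw [smul_add]; abel
      rw [key, e1]
      abel
  · -- M, M'' complete ⇒ M' complete
    rintro ⟨⟨h2inj, h2surj⟩, ⟨h3inj, h3surj⟩⟩
    constructor
    · intro a ha
      have hfa : ∀ j, f (a j) = 0 := by
        apply h2inj
        intro j
        rw [ha j, map_smul]
      intro j
      apply hf
      rw [hfa, map_zero]
    · intro b
      obtain ⟨x, hx⟩ := h2surj (fun j => f (b j))
      have hx' : ∀ j, x j - (p : ℤ_[p]) • x (j + 1) = f (b j) := fun j => congrFun hx j
      have hgx : ∀ j, g (x j) = 0 := by
        apply h3inj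
        intro j
        rw [← sub_eq_zero, ← map_smul, ← map_sub, hx', hgf]
      choose a ha using fun j => hker (x j) (hgx j)
      refine ⟨a, funext fun j => ?_⟩
      show a j - (p : ℤ_[p]) • a (j + 1) = b j
      apply hf
      rw [map_sub, map_smul, ha, ha, hx']
end

section
/- Let p be a prime number, d ∈ ℕ, and let A be a ℤ_p-submodule of (ℚ_p/ℤ_p)^d. Let A_div = { a ∈ A : there exists a sequence (c_i)_{i∈ℕ} of elements of A with c_0 = a and c_i = p·c_{i+1} for all i } be the maximal divisible submodule of A. Then the quotient group A / A_div is finite. -/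
open PadicInt

/-- Abstract finiteness lemma: a submodule annihilated by `r ^ n`, inside a module whose
`r`-torsion is finite, is finite. -/
private lemma finite_of_bounded_torsion {R X : Type*} [CommRing R] [AddCommGroup X] [Module R X]
    (r : R) (hfin : {x : X | r • x = 0}.Finite) :
    ∀ (n : ℕ) (G : Submodule R X), (∀ x ∈ G, r ^ n • x = 0) → Finite G := by
  intro n
  induction n with
  | zero =>
    intro G hG
    have hsub : (G : Set X) ⊆ {0} := by
      intro x hx
      simpa using hG x hx
    exact ((Set.finite_singleton (0 : X)).subset hsub).to_subtype
  | succ n ih =>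
    intro G hG
    have hfinG' : Finite (G.map (LinearMap.lsmul R X r)) := by
      apply ih
      rintro x ⟨y, hy, rfl⟩
      have h := hG y hy
      simp only [LinearMap.lsmul_apply]
      rw [smul_smul, ← pow_succ]
      exact h
    let f : G →+ X := AddMonoidHom.mk' (fun x => r • (x : X)) (by intro a b; simp [smul_add])
    have hker : Finite f.ker := by
      haveI := hfin.to_subtype
      refine Finite.of_injective
        (fun x : f.ker => (⟨((x : G) : X), x.2⟩ : {x : X | r • x = 0})) ?_
      intro a b h
      have h := congrArg Subtype.val h
      exact Subtype.ext (Subtype.ext h)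
    have hrange : Finite f.range := by
      have hsub : (f.range : Set X) ⊆ ((G.map (LinearMap.lsmul R X r)) : Set X) := by
        rintro x ⟨y, rfl⟩
        exact ⟨y, y.2, rfl⟩
      have hfs : ((G.map (LinearMap.lsmul R X r)) : Set X).Finite :=
        Set.finite_coe_iff.mp hfinG'
      exact (hfs.subset hsub).to_subtype
    have hquot : Finite (G ⧸ f.ker) :=
      Finite.of_equiv _ (QuotientAddGroup.quotientKerEquivRange f).symm.toEquiv
    exact Finite.of_equiv _ (AddSubgroup.addGroupEquivQuotientProdAddSubgroup (s := f.ker)).symm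

/-- The `p`-torsion of `ℚ_p/ℤ_p` is finite. -/
private lemma torsion_coord_finite (p : ℕ) [Fact p.Prime]
    (Z : Submodule ℤ_[p] ℚ_[p]) (hZ : ∀ x : ℚ_[p], x ∈ Z ↔ ‖x‖ ≤ 1) :
    {x : ℚ_[p] ⧸ Z | (p : ℤ_[p]) • x = 0}.Finite := by
  have hp : p.Prime := Fact.out
  have hp0 : (p : ℚ_[p]) ≠ 0 := by exact_mod_cast hp.ne_zero
  apply Set.Finite.subset (Set.finite_range
    (fun k : Fin p => Submodule.Quotient.mk (p := Z) ((k : ℚ_[p]) / (p : ℚ_[p]))))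
  intro x hx
  obtain ⟨q, rfl⟩ := Submodule.Quotient.mk_surjective Z x
  have hq : (p : ℤ_[p]) • q ∈ Z := by
    rw [← Submodule.Quotient.mk_eq_zero Z, Submodule.Quotient.mk_smul]
    exact hx
  have hq' : ‖(p : ℚ_[p]) * q‖ ≤ 1 := by
    have h := (hZ _).mp hq
    have : ((p : ℤ_[p]) : ℚ_[p]) * q = (p : ℚ_[p]) * q := by push_cast; ring
    rwa [show (p : ℤ_[p]) • q = ((p : ℤ_[p]) : ℚ_[p]) * q from rfl, this] at h
  set z : ℤ_[p] := ⟨(p : ℚ_[p]) * q, hq'⟩ with hzdef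
  obtain ⟨w, hw⟩ := (Ideal.mem_span_singleton).mp (appr_spec 1 z)
  have hklt : z.appr 1 < p := by simpa using z.appr_lt 1
  refine ⟨⟨z.appr 1, hklt⟩, ?_⟩
  rw [Submodule.Quotient.eq]
  apply (hZ _).mpr
  have hcoe : (z : ℚ_[p]) - (z.appr 1 : ℚ_[p]) = (p : ℚ_[p]) * (w : ℚ_[p]) := by
    have := congrArg (fun t : ℤ_[p] => (t : ℚ_[p])) hw
    push_cast at this
    simpa using this
  have hz : (z : ℚ_[p]) = (p : ℚ_[p]) * q := rfl
  have hdiff : ((z.appr 1 : ℚ_[p]) / (p : ℚ_[p])) - q = -(w : ℚ_[p]) := by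
    field_simp
    rw [hz] at hcoe
    linear_combination -hcoe
  rw [hdiff]
  rw [norm_neg]
  exact w.norm_le_one

/-- The `p`-torsion of `(ℚ_p/ℤ_p)^d` is finite. -/
private lemma torsion_pi_finite (p : ℕ) [Fact p.Prime] (d : ℕ)
    (Z : Submodule ℤ_[p] ℚ_[p]) (hZ : ∀ x : ℚ_[p], x ∈ Z ↔ ‖x‖ ≤ 1) :
    {x : Fin d → ℚ_[p] ⧸ Z | (p : ℤ_[p]) • x = 0}.Finite := by
  have h := torsion_coord_finite p Z hZ
  apply Set.Finite.subset (Set.Finite.pi (fun _ : Fin d => h))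
  intro x hx
  rw [Set.mem_pi]
  intro i _
  have := congrFun hx i
  simpa only [Pi.smul_apply, Pi.zero_apply, Set.mem_setOf_eq] using this

/-- Every element of `ℚ_p/ℤ_p` is killed by some power of `p`. -/
private lemma coord_torsion (p : ℕ) [Fact p.Prime]
    (Z : Submodule ℤ_[p] ℚ_[p]) (hZ : ∀ x : ℚ_[p], x ∈ Z ↔ ‖x‖ ≤ 1)
    (x : ℚ_[p] ⧸ Z) : ∃ n : ℕ, ((p : ℤ_[p]) ^ n) • x = 0 := by
  have hp : p.Prime := Fact.out
  have hp1 : (1 : ℝ) < p := by exact_mod_cast hp.one_lt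
  obtain ⟨q, rfl⟩ := Submodule.Quotient.mk_surjective Z x
  obtain ⟨n, hn⟩ := pow_unbounded_of_one_lt ‖q‖ hp1
  refine ⟨n, ?_⟩
  rw [← Submodule.Quotient.mk_smul, Submodule.Quotient.mk_eq_zero]
  apply (hZ _).mpr
  have hcast : ((p : ℤ_[p]) ^ n) • q = ((p : ℚ_[p]) ^ n) * q := by
    rw [show ((p : ℤ_[p]) ^ n) • q = (((p : ℤ_[p]) ^ n : ℤ_[p]) : ℚ_[p]) * q from rfl]
    push_cast
    ring
  rw [hcast, _root_.norm_mul, _root_.norm_pow, Padic.norm_p]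
  have hpn : (0 : ℝ) < (p : ℝ) ^ n := by positivity
  rw [inv_pow, inv_mul_le_iff₀ hpn]
  simpa using hn.le

/-- Every element of `(ℚ_p/ℤ_p)^d` is killed by some power of `p`. -/
private lemma pi_torsion (p : ℕ) [Fact p.Prime] (d : ℕ)
    (Z : Submodule ℤ_[p] ℚ_[p]) (hZ : ∀ x : ℚ_[p], x ∈ Z ↔ ‖x‖ ≤ 1)
    (x : Fin d → ℚ_[p] ⧸ Z) : ∃ n : ℕ, ((p : ℤ_[p]) ^ n) • x = 0 := by
  choose g hg using fun i => coord_torsion p Z hZ (x i)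
  refine ⟨Finset.univ.sup g, ?_⟩
  funext i
  have hle : g i ≤ Finset.univ.sup g := Finset.le_sup (Finset.mem_univ i)
  have hsplit : (Finset.univ.sup g) = (Finset.univ.sup g - g i) + g i :=
    (Nat.sub_add_cancel hle).symm
  rw [Pi.smul_apply, hsplit, pow_add, mul_smul, hg i, smul_zero]
  rfl

/-- Let `A` be a `ℤ_p`-submodule of `(ℚ_p/ℤ_p)^d` and let `A_div` be its maximal divisible
submodule, consisting of the elements `a` admitting a sequence `(c i)` in `A` with
`c 0 = a` and `c i = p • c (i+1)` for all `i`.  Then the quotient `A / A_div` is finite. -/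
theorem stmt_8 (p : ℕ) [Fact p.Prime] (d : ℕ)
    (Z : Submodule ℤ_[p] ℚ_[p]) (hZ : ∀ x : ℚ_[p], x ∈ Z ↔ ‖x‖ ≤ 1)
    (A : Submodule ℤ_[p] (Fin d → ℚ_[p] ⧸ Z))
    (Adiv : Submodule ℤ_[p] A)
    (hAdiv : ∀ a : A, a ∈ Adiv ↔
      ∃ c : ℕ → A, c 0 = a ∧ ∀ i, c i = (p : ℤ_[p]) • c (i + 1)) :
    Finite (A ⧸ Adiv) := by
  classical
  set M := Fin d → ℚ_[p] ⧸ Z with hM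
  have Kfin : {x : M | (p : ℤ_[p]) • x = 0}.Finite := torsion_pi_finite p d Z hZ
  have tors : ∀ x : M, ∃ n : ℕ, ((p : ℤ_[p]) ^ n) • x = 0 := pi_torsion p d Z hZ
  set B : ℕ → Submodule ℤ_[p] M :=
    (fun n => A.map (LinearMap.lsmul ℤ_[p] M ((p : ℤ_[p]) ^ n))) with hB
  have memB : ∀ (n : ℕ) (x : M), x ∈ B n ↔ ∃ a ∈ A, ((p : ℤ_[p]) ^ n) • a = x := by
    intro n x
    exact Iff.rfl
  have Bmono : ∀ n, B (n + 1) ≤ B n := by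
    intro n x hx
    obtain ⟨a, ha, rfl⟩ := (memB _ _).mp hx
    exact (memB _ _).mpr ⟨(p : ℤ_[p]) • a, A.smul_mem _ ha, by rw [smul_smul, ← pow_succ]⟩
  have Ble : ∀ n m, n ≤ m → B m ≤ B n := by
    intro n m h
    induction h with
    | refl => exact le_refl _
    | step _ ih => exact le_trans (Bmono _) ih
  have Bmap : ∀ n, (B n).map (LinearMap.lsmul ℤ_[p] M (p : ℤ_[p])) = B (n + 1) := by
    intro n
    rw [hB]
    simp only
    rw [← Submodule.map_comp]
    congr 1
    refine LinearMap.ext fun x => ?_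
    simp only [LinearMap.comp_apply, LinearMap.lsmul_apply]
    rw [smul_smul, ← pow_succ']
  -- stabilization of the p-torsion of B n
  set Vs : ℕ → Set M := fun n => (B n : Set M) ∩ {x | (p : ℤ_[p]) • x = 0} with hVs
  have Vfin : ∀ n, (Vs n).Finite := fun n => Kfin.subset Set.inter_subset_right
  have Vsub : ∀ n m, n ≤ m → Vs m ⊆ Vs n := fun n m h =>
    Set.inter_subset_inter_left _ (Ble n m h)
  obtain ⟨N, hN⟩ : ∃ N, ∀ n, (Vs N).ncard ≤ (Vs n).ncard := by
    have hne : (Set.range fun n => (Vs n).ncard).Nonempty := ⟨_, ⟨0, rfl⟩⟩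
    obtain ⟨N, hNeq⟩ := Nat.sInf_mem hne
    exact ⟨N, fun n => le_trans (le_of_eq hNeq) (Nat.sInf_le ⟨n, rfl⟩)⟩
  have Veq : ∀ n, N ≤ n → Vs n = Vs N := fun n h =>
    Set.eq_of_subset_of_ncard_le (Vsub N n h) (hN n) (Vfin N)
  -- key divisibility claim
  have key : ∀ (m : ℕ) (x : M), x ∈ B N → ((p : ℤ_[p]) ^ m) • x = 0 → x ∈ B (N + 1) := by
    intro m
    induction m with
    | zero =>
      intro x _ h0
      have hx0 : x = 0 := by simpa using h0
      rw [hx0]; exact zero_mem _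
    | succ m ih =>
      intro x hx hm
      obtain ⟨a, ha, rfl⟩ := (memB _ _).mp hx
      set x := ((p : ℤ_[p]) ^ N) • a with hxdef
      set y := ((p : ℤ_[p]) ^ m) • x with hydef
      have hyB : y ∈ B (N + m) := by
        refine (memB _ _).mpr ⟨a, ha, ?_⟩
        rw [hydef, hxdef, smul_smul, ← pow_add, Nat.add_comm m N]
      have hy0 : (p : ℤ_[p]) • y = 0 := by
        rw [hydef, smul_smul, ← pow_succ']
        exact hm
      have hyV : y ∈ Vs (N + m) := ⟨hyB, hy0⟩
      rw [Veq (N + m) (Nat.le_add_right N m), ← Veq (N + m + 1) (by omega)] at hyV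
      obtain ⟨c, hc, hcy⟩ := (memB _ _).mp hyV.1
      set w := ((p : ℤ_[p]) ^ (N + 1)) • c with hwdef
      have hwB : w ∈ B (N + 1) := (memB _ _).mpr ⟨c, hc, rfl⟩
      have hpmw : ((p : ℤ_[p]) ^ m) • w = y := by
        rw [hwdef, smul_smul, ← pow_add, show m + (N + 1) = N + m + 1 by omega, hcy]
      have hxw : ((p : ℤ_[p]) ^ m) • (x - w) = 0 := by
        rw [smul_sub, hpmw, hydef, sub_self]
      have hxwB : x - w ∈ B N := (B N).sub_mem hx (Bmono N hwB)
      have hres := ih (x - w) hxwB hxw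
      have hxsplit : x = (x - w) + w := by abel
      rw [hxsplit]
      exact (B (N + 1)).add_mem hres hwB
  have hBstab : B (N + 1) = B N := by
    refine le_antisymm (Bmono N) ?_
    intro x hx
    obtain ⟨m, hm⟩ := tors x
    exact key m x hx hm
  set D := B N with hD
  have hB0 : B 0 = A := by
    ext x
    rw [memB]
    constructor
    · rintro ⟨a, ha, rfl⟩; simpa using ha
    · intro hx; exact ⟨x, hx, by simp⟩
  have hDA : D ≤ A := hB0 ▸ Ble 0 N (Nat.zero_le N)
  have hDmap : D.map (LinearMap.lsmul ℤ_[p] M (p : ℤ_[p])) = D := by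
    rw [hD, Bmap N, hBstab]
  -- identification of Adiv
  have hdiv : ∀ a : A, a ∈ Adiv ↔ (a : M) ∈ D := by
    intro a
    rw [hAdiv]
    constructor
    · rintro ⟨c, hc0, hrec⟩
      have hchain : ∀ n, (a : M) = ((p : ℤ_[p]) ^ n) • ((c n : A) : M) := by
        intro n
        induction n with
        | zero => rw [hc0]; simp
        | succ n ihn =>
          have hcn : ((c n : A) : M) = (p : ℤ_[p]) • ((c (n + 1) : A) : M) := by
            have := congrArg (Subtype.val) (hrec n)
            simpa using this
          rw [ihn, hcn, smul_smul, ← pow_succ]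
      exact (memB N _).mpr ⟨(c N : A), (c N).2, (hchain N).symm⟩
    · intro haD
      have hsur : ∀ y : M, y ∈ D → ∃ z : M, z ∈ D ∧ (p : ℤ_[p]) • z = y := by
        intro y hy
        rw [← hDmap] at hy
        obtain ⟨z, hz, hzy⟩ := hy
        exact ⟨z, hz, hzy⟩
      let f : {y : M // y ∈ D} → {y : M // y ∈ D} :=
        fun y => ⟨(hsur y.1 y.2).choose, (hsur y.1 y.2).choose_spec.1⟩
      have hf : ∀ y : {y : M // y ∈ D}, (p : ℤ_[p]) • (f y).1 = y.1 :=
        fun y => (hsur y.1 y.2).choose_spec.2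
      let c' : ℕ → {y : M // y ∈ D} := fun n => f^[n] ⟨(a : M), haD⟩
      have hc'succ : ∀ n, c' (n + 1) = f (c' n) := by
        intro n
        simp only [c', Function.iterate_succ_apply']
      refine ⟨fun n => ⟨(c' n).1, hDA (c' n).2⟩, ?_, ?_⟩
      · apply Subtype.ext
        rfl
      · intro i
        apply Subtype.ext
        show (c' i).1 = ((p : ℤ_[p]) • (⟨(c' (i+1)).1, hDA (c' (i+1)).2⟩ : A) : A).1
        rw [Submodule.coe_smul]
        rw [hc'succ i]
        exact (hf (c' i)).symm
  -- conclusion via the quotient map to M ⧸ D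
  let φ : A →ₗ[ℤ_[p]] M ⧸ D := D.mkQ.comp A.subtype
  have hker : LinearMap.ker φ = Adiv := by
    ext a
    rw [LinearMap.mem_ker]
    show D.mkQ (a : M) = 0 ↔ a ∈ Adiv
    rw [Submodule.mkQ_apply, Submodule.Quotient.mk_eq_zero, hdiv a]
  have e0 : (A ⧸ Adiv) ≃ₗ[ℤ_[p]] (A ⧸ LinearMap.ker φ) :=
    Submodule.quotEquivOfEq _ _ hker.symm
  have e1 : (A ⧸ Adiv) ≃ₗ[ℤ_[p]] LinearMap.range φ := e0.trans φ.quotKerEquivRange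
  have hrange : LinearMap.range φ = A.map D.mkQ := by
    rw [LinearMap.range_comp, Submodule.range_subtype]
  have hfinq : {x : M ⧸ D | (p : ℤ_[p]) • x = 0}.Finite := by
    apply Set.Finite.subset (Kfin.image D.mkQ)
    intro x hx
    obtain ⟨b, rfl⟩ := D.mkQ_surjective x
    have hb : (p : ℤ_[p]) • b ∈ D := by
      rw [← Submodule.Quotient.mk_eq_zero D]
      rw [← Submodule.mkQ_apply, map_smul]
      exact hx
    rw [← hDmap] at hb
    obtain ⟨y, hy, hyb⟩ := hb
    have hyb' : (p : ℤ_[p]) • y = (p : ℤ_[p]) • b := hyb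
    refine ⟨b - y, ?_, ?_⟩
    · show (p : ℤ_[p]) • (b - y) = 0
      rw [smul_sub, hyb', sub_self]
    · have hy0' : D.mkQ y = 0 := (Submodule.Quotient.mk_eq_zero D).mpr hy
      rw [map_sub, hy0', sub_zero]
  have hGtor : ∀ x ∈ A.map D.mkQ, ((p : ℤ_[p]) ^ N) • x = 0 := by
    rintro x ⟨a, ha, rfl⟩
    rw [← map_smul]
    rw [Submodule.mkQ_apply, Submodule.Quotient.mk_eq_zero]
    exact (memB N _).mpr ⟨a, ha, rfl⟩
  have hGfin : Finite (A.map D.mkQ) :=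
    finite_of_bounded_torsion (p : ℤ_[p]) hfinq N _ hGtor
  rw [← hrange] at hGfin
  exact Finite.of_equiv _ e1.symm.toEquiv
end
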